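/- Let M be a finite matroid on ground set E with rank function r_M, let Z ⊆ E, and let b be an element not in E. Define R on subsets of E ∪ {b} by R(X) = r_M(X) for X ⊆ E, and, for X ⊆ E, R(X ∪ {b}) = r_M(X) if r_M(Z ∪ X) = r_M(X), and R(X ∪ {b}) = r_M(X) + 1 otherwise. Then R is the rank function of a matroid on E ∪ {b}; that is, there exists a matroid M' on E ∪ {b} whose rank function is R (this is the operation of placing b freely into the closure of Z). -/

import Mathlib

/-- A finite matroid on ground set `E`, given by its rank function, which satisfies
`r ∅ = 0`, the unit-increase property, and submodularity (on subsets of `E`). -/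
structure FinMatroid (α : Type*) [DecidableEq α] where
  E : Finset α
  r : Finset α → ℕ
  r_empty : r ∅ = 0
  r_le_insert : ∀ X ⊆ E, ∀ e ∈ E, r X ≤ r (insert e X)
  r_insert_le : ∀ X ⊆ E, ∀ e ∈ E, r (insert e X) ≤ r X + 1
  r_submod : ∀ X ⊆ E, ∀ Y ⊆ E, r (X ∪ Y) + r (X ∩ Y) ≤ r X + r Y

namespace FinMatroid

variable {α : Type*} [DecidableEq α]

/-- A set is independent if it is a subset of the ground set whose rank equals its
cardinality. -/
def Indep (M : FinMatroid α) (X : Finset α) : Prop :=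
  X ⊆ M.E ∧ M.r X = X.card

/-- A set is dependent if it is a subset of the ground set that is not independent. -/
def Dep (M : FinMatroid α) (X : Finset α) : Prop :=
  X ⊆ M.E ∧ M.r X ≠ X.card

/-- A circuit is a minimal dependent set: a dependent set all of whose proper subsets
are independent. -/
def Circuit (M : FinMatroid α) (C : Finset α) : Prop :=
  M.Dep C ∧ ∀ C' ⊂ C, M.Indep C'

/-- The connectivity function `λ_M(X) = r(X) + r(E \ X) - r(E)`. -/
def lambda (M : FinMatroid α) (X : Finset α) : ℤ :=
  (M.r X : ℤ) + (M.r (M.E \ X) : ℤ) - (M.r M.E : ℤ)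

/-- `μ_M(X, A) = r(X ∪ A) + r((E \ X) ∪ A) - r(E)`. -/
def mu (M : FinMatroid α) (X A : Finset α) : ℤ :=
  (M.r (X ∪ A) : ℤ) + (M.r ((M.E \ X) ∪ A) : ℤ) - (M.r M.E : ℤ)

/-- The closure `cl_M(X) = {e ∈ E : r(X ∪ {e}) = r(X)}`. -/
def cl (M : FinMatroid α) (X : Finset α) : Finset α :=
  M.E.filter fun e => M.r (insert e X) = M.r X

/-- The width of the path-decomposition (ordering) given by the list `L`:
the maximum of `λ_M({e₁, …, e_i})` over the nonempty prefixes of `L`. -/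
def pdWidth (M : FinMatroid α) (L : List α) : ℤ :=
  ((List.range L.length).map fun i => M.lambda (L.take (i + 1)).toFinset).foldr max 0

/-- The path-width of a matroid: the minimum width over all orderings of the ground
set. -/
noncomputable def pathwidth (M : FinMatroid α) : ℤ :=
  sInf (M.pdWidth '' { L : List α | L.Nodup ∧ L.toFinset = M.E })

end FinMatroid

namespace FinMatroid
variable {α : Type*} [DecidableEq α]

lemma union_r_le' (M : FinMatroid α) :
    ∀ A ⊆ M.E, ∀ X ⊆ M.E, M.r X ≤ M.r (X ∪ A) := by
  intro A
  induction A using Finset.induction_on with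
  | empty => intro _ X _; simp
  | @insert a A ha ih =>
    intro hA X hX
    have haE : a ∈ M.E := hA (Finset.mem_insert_self a A)
    have hAE : A ⊆ M.E := fun x hx => hA (Finset.mem_insert_of_mem hx)
    have h2 : X ∪ insert a A = insert a (X ∪ A) := by
      exact Finset.union_insert ..
    rw [h2]
    exact (ih hAE X hX).trans (M.r_le_insert (X ∪ A) (Finset.union_subset hX hAE) a haE)

lemma myMono (M : FinMatroid α) {X Y : Finset α}
    (hXY : X ⊆ Y) (hY : Y ⊆ M.E) : M.r X ≤ M.r Y := by
  have h := M.union_r_le' (Y \ X) ((Finset.sdiff_subset).trans hY) X (hXY.trans hY)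
  rwa [Finset.union_sdiff_of_subset hXY] at h

/-- rank of `X ∪ {b}` in the extension, for `A = X`. -/
def gR (M : FinMatroid α) (Z A : Finset α) : ℕ :=
  min (M.r A + 1) (M.r (Z ∪ A))

lemma r_le_gR (M : FinMatroid α) {Z A : Finset α} (hZ : Z ⊆ M.E) (hA : A ⊆ M.E) :
    M.r A ≤ M.gR Z A := by
  have h := M.myMono (Finset.subset_union_right)
    (Finset.union_subset hZ hA)
  unfold gR; omega

lemma gR_mono (M : FinMatroid α) {Z A B : Finset α} (hZ : Z ⊆ M.E)
    (hAB : A ⊆ B) (hB : B ⊆ M.E) : M.gR Z A ≤ M.gR Z B := by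
  have h1 := M.myMono hAB hB
  have h2 := M.myMono (Finset.union_subset_union_right hAB)
    (Finset.union_subset hZ hB)
  unfold gR; omega

lemma gR_insert_le (M : FinMatroid α) {Z A : Finset α} (hZ : Z ⊆ M.E)
    (hA : A ⊆ M.E) {e : α} (he : e ∈ M.E) :
    M.gR Z (insert e A) ≤ M.gR Z A + 1 := by
  have h1 := M.r_insert_le A hA e he
  have h2 : M.r (Z ∪ insert e A) ≤ M.r (Z ∪ A) + 1 := by
    rw [Finset.union_insert]
    exact M.r_insert_le (Z ∪ A) (Finset.union_subset hZ hA) e he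
  unfold gR; omega

lemma gR_submod (M : FinMatroid α) {Z A B : Finset α} (hZ : Z ⊆ M.E)
    (hA : A ⊆ M.E) (hB : B ⊆ M.E) :
    M.gR Z (A ∪ B) + M.gR Z (A ∩ B) ≤ M.gR Z A + M.gR Z B := by
  have hZA : Z ∪ A ⊆ M.E := Finset.union_subset hZ hA
  have hZB : Z ∪ B ⊆ M.E := Finset.union_subset hZ hB
  have f1 := M.r_submod A hA B hB
  have f2 : M.r (Z ∪ (A ∪ B)) + M.r (Z ∪ A ∩ B) ≤ M.r (Z ∪ A) + M.r (Z ∪ B) := by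
    have h := M.r_submod (Z ∪ A) hZA (Z ∪ B) hZB
    have e1 : (Z ∪ A) ∪ (Z ∪ B) = Z ∪ (A ∪ B) := by
      ext x; simp [Finset.mem_union]; tauto
    have e2 : (Z ∪ A) ∩ (Z ∪ B) = Z ∪ A ∩ B := by
      ext x; simp [Finset.mem_union, Finset.mem_inter]; tauto
    rwa [e1, e2] at h
  have f3 : M.r (Z ∪ (A ∪ B)) + M.r ((Z ∪ A) ∩ B) ≤ M.r (Z ∪ A) + M.r B := by
    have h := M.r_submod (Z ∪ A) hZA B hB
    rwa [Finset.union_assoc] at h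
  have f4 : M.r (A ∩ B) ≤ M.r ((Z ∪ A) ∩ B) := by
    refine M.myMono (Finset.inter_subset_inter ?_ le_rfl)
      ((Finset.inter_subset_right).trans hB)
    exact Finset.subset_union_right
  have f3' : M.r (Z ∪ (A ∪ B)) + M.r (A ∩ (Z ∪ B)) ≤ M.r A + M.r (Z ∪ B) := by
    have h := M.r_submod A hA (Z ∪ B) hZB
    have e1 : A ∪ (Z ∪ B) = Z ∪ (A ∪ B) := by
      ext x; simp [Finset.mem_union]; tauto
    rwa [e1] at h
  have f4' : M.r (A ∩ B) ≤ M.r (A ∩ (Z ∪ B)) := by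
    refine M.myMono (Finset.inter_subset_inter le_rfl ?_)
      ((Finset.inter_subset_left).trans hA)
    exact Finset.subset_union_right
  have f5 := M.myMono (Finset.subset_union_right) hZA
  have f6 := M.myMono (Finset.subset_union_right) hZB
  have f7 : M.r (A ∩ B) ≤ M.r (Z ∪ A ∩ B) :=
    M.myMono Finset.subset_union_right
      (Finset.union_subset hZ ((Finset.inter_subset_left).trans hA))
  have f8 : M.r (A ∪ B) ≤ M.r (Z ∪ (A ∪ B)) :=
    M.myMono Finset.subset_union_right
      (Finset.union_subset hZ (Finset.union_subset hA hB))
  unfold gR; omega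

lemma gR_mixed (M : FinMatroid α) {Z A Y : Finset α} (hZ : Z ⊆ M.E)
    (hA : A ⊆ M.E) (hY : Y ⊆ M.E) :
    M.gR Z (A ∪ Y) + M.r (A ∩ Y) ≤ M.gR Z A + M.r Y := by
  have hZA : Z ∪ A ⊆ M.E := Finset.union_subset hZ hA
  have f1 := M.r_submod A hA Y hY
  have f3 : M.r (Z ∪ (A ∪ Y)) + M.r ((Z ∪ A) ∩ Y) ≤ M.r (Z ∪ A) + M.r Y := by
    have h := M.r_submod (Z ∪ A) hZA Y hY
    rwa [Finset.union_assoc] at h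
  have f4 : M.r (A ∩ Y) ≤ M.r ((Z ∪ A) ∩ Y) := by
    refine M.myMono (Finset.inter_subset_inter ?_ le_rfl)
      ((Finset.inter_subset_right).trans hY)
    exact Finset.subset_union_right
  have f5 := M.myMono (Finset.subset_union_right) hZA
  unfold gR; omega

end FinMatroid

open FinMatroid in
/-- Placing `b` freely into the closure of `Z`: the function `R` which agrees with `r_M`
on subsets of `E`, and with `R(X ∪ {b}) = r_M(X)` if `r_M(Z ∪ X) = r_M(X)` and
`R(X ∪ {b}) = r_M(X) + 1` otherwise, is the rank function of a matroid on `E ∪ {b}`. -/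
theorem exists_free_closure_extension {α : Type*} [DecidableEq α] (M : FinMatroid α)
    (Z : Finset α) (hZ : Z ⊆ M.E) (b : α) (hb : b ∉ M.E) :
    ∃ M' : FinMatroid α, M'.E = insert b M.E ∧
      (∀ X ⊆ M.E, M'.r X = M.r X) ∧
      (∀ X ⊆ M.E, M'.r (insert b X) =
        if M.r (Z ∪ X) = M.r X then M.r X else M.r X + 1) := by
  have hsub : ∀ X ⊆ insert b M.E, X.erase b ⊆ M.E := by
    intro X hX x hx
    obtain ⟨hxb, hxX⟩ := Finset.mem_erase.mp hx
    rcases Finset.mem_insert.mp (hX hxX) with h | h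
    · exact absurd h hxb
    · exact h
  have hsub' : ∀ X ⊆ insert b M.E, b ∉ X → X ⊆ M.E := by
    intro X hX hbX x hx
    rcases Finset.mem_insert.mp (hX hx) with h | h
    · exact absurd (h ▸ hx) hbX
    · exact h
  refine ⟨⟨insert b M.E,
      fun X => if b ∈ X then M.gR Z (X.erase b) else M.r X, ?_, ?_, ?_, ?_⟩,
      rfl, ?_, ?_⟩
  · simp [M.r_empty]
  · -- r_le_insert
    intro X hX e he
    by_cases hbX : b ∈ X
    · by_cases heb : e = b
      · subst heb; rw [Finset.insert_eq_self.mpr hbX]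
      · have heE : e ∈ M.E := by
          rcases Finset.mem_insert.mp he with h | h
          · exact absurd h heb
          · exact h
        rw [if_pos hbX, if_pos (Finset.mem_insert_of_mem hbX),
          Finset.erase_insert_of_ne heb]
        exact M.gR_mono hZ (Finset.subset_insert _ _)
          (Finset.insert_subset heE (hsub X hX))
    · by_cases heb : e = b
      · subst heb
        rw [if_neg hbX, if_pos (Finset.mem_insert_self _ _),
          Finset.erase_insert hbX]
        exact M.r_le_gR hZ (hsub' X hX hbX)
      · have heE : e ∈ M.E := by
          rcases Finset.mem_insert.mp he with h | h
          · exact absurd h heb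
          · exact h
        have : b ∉ insert e X := by
          intro h
          rcases Finset.mem_insert.mp h with h | h
          · exact heb h.symm
          · exact hbX h
        rw [if_neg hbX, if_neg this]
        exact M.r_le_insert X (hsub' X hX hbX) e heE
  · -- r_insert_le
    intro X hX e he
    by_cases hbX : b ∈ X
    · by_cases heb : e = b
      · subst heb; rw [Finset.insert_eq_self.mpr hbX]; omega
      · have heE : e ∈ M.E := by
          rcases Finset.mem_insert.mp he with h | h
          · exact absurd h heb
          · exact h
        rw [if_pos hbX, if_pos (Finset.mem_insert_of_mem hbX),
          Finset.erase_insert_of_ne heb]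
        exact M.gR_insert_le hZ (hsub X hX) heE
    · by_cases heb : e = b
      · subst heb
        rw [if_neg hbX, if_pos (Finset.mem_insert_self _ _),
          Finset.erase_insert hbX]
        exact min_le_left _ _
      · have heE : e ∈ M.E := by
          rcases Finset.mem_insert.mp he with h | h
          · exact absurd h heb
          · exact h
        have : b ∉ insert e X := by
          intro h
          rcases Finset.mem_insert.mp h with h | h
          · exact heb h.symm
          · exact hbX h
        rw [if_neg hbX, if_neg this]
        exact M.r_insert_le X (hsub' X hX hbX) e heE
  · -- submod
    intro X hX Y hY
    by_cases hbX : b ∈ X <;> by_cases hbY : b ∈ Y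
    · rw [if_pos hbX, if_pos hbY, if_pos (Finset.mem_union_left Y hbX),
        if_pos (Finset.mem_inter.mpr ⟨hbX, hbY⟩),
        Finset.erase_union_distrib]
      have e2 : (X ∩ Y).erase b = X.erase b ∩ Y.erase b := by
        rw [Finset.erase_inter, Finset.inter_erase]
        simp [Finset.erase_idem]
      rw [e2]
      exact M.gR_submod hZ (hsub X hX) (hsub Y hY)
    · have h1 : b ∉ X ∩ Y := fun h => hbY (Finset.mem_inter.mp h).2
      rw [if_pos hbX, if_neg hbY, if_pos (Finset.mem_union_left Y hbX), if_neg h1]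
      have e1 : (X ∪ Y).erase b = X.erase b ∪ Y := by
        rw [Finset.erase_union_distrib, Finset.erase_eq_self.mpr hbY]
      have e2 : X ∩ Y = X.erase b ∩ Y := by
        ext x
        simp only [Finset.mem_inter, Finset.mem_erase]
        constructor
        · rintro ⟨h1, h2⟩; exact ⟨⟨fun hh => hbY (hh ▸ h2), h1⟩, h2⟩
        · rintro ⟨⟨_, h1⟩, h2⟩; exact ⟨h1, h2⟩
      rw [e1, e2]
      exact M.gR_mixed hZ (hsub X hX) (hsub' Y hY hbY)
    · have h1 : b ∉ X ∩ Y := fun h => hbX (Finset.mem_inter.mp h).1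
      rw [if_neg hbX, if_pos hbY, if_pos (Finset.mem_union_right X hbY), if_neg h1]
      have e1 : (X ∪ Y).erase b = Y.erase b ∪ X := by
        rw [Finset.erase_union_distrib, Finset.erase_eq_self.mpr hbX,
          Finset.union_comm]
      have e2 : X ∩ Y = Y.erase b ∩ X := by
        ext x
        simp only [Finset.mem_inter, Finset.mem_erase]
        constructor
        · rintro ⟨h1, h2⟩; exact ⟨⟨fun hh => hbX (hh ▸ h1), h2⟩, h1⟩
        · rintro ⟨⟨_, h1⟩, h2⟩; exact ⟨h2, h1⟩
      rw [e1, e2]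
      have := M.gR_mixed hZ (hsub Y hY) (hsub' X hX hbX)
      omega
    · have h1 : b ∉ X ∪ Y := by
        simp [Finset.mem_union, hbX, hbY]
      have h2 : b ∉ X ∩ Y := fun h => hbX (Finset.mem_inter.mp h).1
      rw [if_neg hbX, if_neg hbY, if_neg h1, if_neg h2]
      exact M.r_submod X (hsub' X hX hbX) Y (hsub' Y hY hbY)
  · -- agrees with r on E-subsets
    intro X hX
    have : b ∉ X := fun h => hb (hX h)
    simp [this]
  · -- formula for insert b X
    intro X hX
    have hbX : b ∉ X := fun h => hb (hX h)
    dsimp only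
    rw [if_pos (Finset.mem_insert_self _ _), Finset.erase_insert hbX]
    have hmono : M.r X ≤ M.r (Z ∪ X) :=
      M.myMono Finset.subset_union_right (Finset.union_subset hZ hX)
    unfold FinMatroid.gR
    split
    · next h => omega
    · next h => omega
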